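/- Under the EH prior, the ratio p(λ;α,β,γ)/π_EH(λ;γ) converges to 1 as λ → ∞, where p(λ;α,β,γ) = (β^α γ/Γ(α)) ∫₀^∞ x^{-α} e^{-β/x} (1+λx)^{-1}(1+log(1+λx))^{-(1+γ)} dx and π_EH(λ;γ) = γ(1+λ)^{-1}(1+log(1+λ))^{-(1+γ)}. -/

import Mathlib

open Real Set Filter MeasureTheory

lemma aux_int_lin (s r : ℝ) (hs : -1 < s) (hr : 0 < r) :
    IntegrableOn (fun y : ℝ => y ^ s * Real.exp (-(r * y))) (Set.Ioi 0) := by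
  have h0 : IntegrableOn (fun x : ℝ => Real.exp (-x) * x ^ s) (Set.Ioi 0) := by
    simpa using Real.GammaIntegral_convergent (s := s + 1) (by linarith)
  have h1 := (integrableOn_Ioi_comp_mul_left_iff
      (fun x : ℝ => Real.exp (-x) * x ^ s) 0 hr).mpr (by simpa using h0)
  have h2 : IntegrableOn (fun x : ℝ => (r ^ s)⁻¹ *
      (Real.exp (-(r * x)) * (r * x) ^ s)) (Set.Ioi 0) := h1.const_mul (r ^ s)⁻¹
  refine IntegrableOn.congr_fun h2 (fun x hx => ?_) measurableSet_Ioi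
  have hx0 : (0:ℝ) < x := hx
  rw [Real.mul_rpow hr.le hx0.le]
  have hrs : (0:ℝ) < r ^ s := Real.rpow_pos_of_pos hr s
  field_simp

lemma aux_int_inv (a b : ℝ) (ha : 1 < a) (hb : 0 < b) :
    IntegrableOn (fun x : ℝ => x ^ (-a) * Real.exp (-b / x)) (Set.Ioi 0) := by
  have h := (integrableOn_Ioi_comp_rpow_iff'
      (fun y : ℝ => y ^ (a - 2) * Real.exp (-(b * y))) (p := -1) (by norm_num)).mpr
      (aux_int_lin (a - 2) b (by linarith) hb)
  refine IntegrableOn.congr_fun h (fun x hx => ?_) measurableSet_Ioi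
  have hx0 : (0:ℝ) < x := hx
  have h1 : (x : ℝ) ^ (-1 : ℝ) = x⁻¹ := Real.rpow_neg_one x
  have hx1 : x ^ ((-1:ℝ) - 1) * x ^ (-(a-2)) = x ^ (-a) := by
    rw [← Real.rpow_add hx0]; ring_nf
  have hx2 : -b / x = -(b * x⁻¹) := by rw [neg_div, div_eq_mul_inv]
  simp only [smul_eq_mul, h1, Real.inv_rpow hx0.le, ← Real.rpow_neg hx0.le]
  rw [hx2, ← hx1]; ring

lemma aux_eq_Gamma (a b : ℝ) (ha : 0 < a) (hb : 0 < b) :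
    ∫ x in Set.Ioi (0:ℝ), x ^ (-(a+1)) * Real.exp (-b / x) = Real.Gamma a / b ^ a := by
  have key := integral_comp_rpow_Ioi (fun y : ℝ => y ^ (a - 1) * Real.exp (-(b * y)))
      (p := -1) (by norm_num)
  rw [integral_rpow_mul_exp_neg_mul_Ioi ha hb] at key
  have hL : (∫ x in Set.Ioi (0:ℝ), (|(-1:ℝ)| * x ^ ((-1:ℝ) - 1)) •
      ((x ^ (-1:ℝ)) ^ (a - 1) * Real.exp (-(b * x ^ (-1:ℝ)))))
      = ∫ x in Set.Ioi (0:ℝ), x ^ (-(a+1)) * Real.exp (-b / x) := by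
    refine setIntegral_congr_fun measurableSet_Ioi (fun x hx => ?_)
    have hx0 : (0:ℝ) < x := hx
    have h1 : (x : ℝ) ^ (-1 : ℝ) = x⁻¹ := Real.rpow_neg_one x
    have hx1 : x ^ ((-1:ℝ) - 1) * x ^ (-(a-1)) = x ^ (-(a+1)) := by
      rw [← Real.rpow_add hx0]; ring_nf
    have hx2 : -b / x = -(b * x⁻¹) := by rw [neg_div, div_eq_mul_inv]
    simp only [smul_eq_mul, h1, Real.inv_rpow hx0.le, ← Real.rpow_neg hx0.le,
      abs_neg, abs_one, one_mul]
    rw [hx2, ← hx1]; ring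
  rw [hL] at key
  rw [key, one_div, Real.inv_rpow hb.le]
  have : (0:ℝ) < b ^ a := Real.rpow_pos_of_pos hb a
  field_simp

set_option maxHeartbeats 2000000 in
theorem eh_marginal_tail_equiv (α β γ : ℝ) (hα : 0 < α) (hβ : 0 < β) (hγ : 0 < γ) :
    Filter.Tendsto
      (fun l : ℝ =>
        ((β ^ α * γ / Real.Gamma α) *
          ∫ x in Set.Ioi (0:ℝ),
            x ^ (-α) * Real.exp (-β / x) * (1 + l * x)⁻¹ *
              (1 + Real.log (1 + l * x)) ^ (-(1 + γ))) /
        (γ * (1 + l)⁻¹ * (1 + Real.log (1 + l)) ^ (-(1 + γ))))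
      Filter.atTop (nhds 1) := by
  have hΓ : 0 < Real.Gamma α := Real.Gamma_pos_of_pos hα
  have hβα : 0 < β ^ α := Real.rpow_pos_of_pos hβ α
  set ψ : ℝ → ℝ → ℝ := fun l x =>
    x ^ (-α) * Real.exp (-β / x) * ((1 + l) / (1 + l * x)) *
      ((1 + Real.log (1 + l)) / (1 + Real.log (1 + l * x))) ^ (1 + γ) with hψ
  set f : ℝ → ℝ := fun x => x ^ (-α) * Real.exp (-β / x) * x⁻¹ * (1:ℝ) ^ (1 + γ) with hf
  set K : ℝ := 2 * 3 ^ (1 + γ) with hK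
  have hK0 : 0 ≤ K := by positivity
  set bound : ℝ → ℝ := fun x =>
    K * (x ^ (-(α + 1)) * Real.exp (-β / x)) + K * (x ^ (-(α + γ + 2)) * Real.exp (-β / x))
    with hbd
  have hbint : Integrable bound ((volume : Measure ℝ).restrict (Set.Ioi 0)) :=
    ((aux_int_inv (α + 1) β (by linarith) hβ).const_mul K).add
      ((aux_int_inv (α + γ + 2) β (by linarith) hβ).const_mul K)
  have hmeas : ∀ᶠ l : ℝ in atTop,
      AEStronglyMeasurable (ψ l) ((volume : Measure ℝ).restrict (Set.Ioi 0)) := by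
    filter_upwards [eventually_ge_atTop (1:ℝ)] with l hl
    refine ContinuousOn.aestronglyMeasurable (fun x hx => ?_) measurableSet_Ioi
    have hx0 : (0:ℝ) < x := hx
    have hl0 : (0:ℝ) < l := lt_of_lt_of_le one_pos hl
    have h1lx : (0:ℝ) < 1 + l * x := by nlinarith
    have hc1 : ContinuousAt (fun x : ℝ => x ^ (-α)) x :=
      Real.continuousAt_rpow_const x (-α) (Or.inl hx0.ne')
    have hc2 : ContinuousAt (fun x : ℝ => Real.exp (-β / x)) x :=
      Real.continuous_exp.continuousAt.comp
        (continuousAt_const.div continuousAt_id hx0.ne' : ContinuousAt (fun x : ℝ => -β / x) x)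
    have hc3 : ContinuousAt (fun x : ℝ => (1 + l) / (1 + l * x)) x :=
      continuousAt_const.div (continuousAt_const.add (continuousAt_id.const_mul l)) h1lx.ne'
    have hc4 : ContinuousAt (fun x : ℝ =>
        ((1 + Real.log (1 + l)) / (1 + Real.log (1 + l * x))) ^ (1 + γ)) x := by
      refine ContinuousAt.rpow_const ?_ (Or.inr (by linarith))
      exact continuousAt_const.div
        (continuousAt_const.add
          ((continuousAt_const.add (continuousAt_id.const_mul l)).log h1lx.ne'))
        (by
          have := Real.log_nonneg (by nlinarith : (1:ℝ) ≤ 1 + l * x)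
          intro hcon; linarith [hcon])
    exact (((hc1.mul hc2).mul hc3).mul hc4).continuousWithinAt
  have hboundl : ∀ᶠ l : ℝ in atTop, ∀ᵐ x ∂(volume : Measure ℝ).restrict (Set.Ioi 0),
      ‖ψ l x‖ ≤ bound x := by
    filter_upwards [eventually_ge_atTop (1:ℝ)] with l hl
    rw [ae_restrict_iff' measurableSet_Ioi]
    refine ae_of_all _ (fun x hx => ?_)
    have hx0 : (0:ℝ) < x := hx
    have hl0 : (0:ℝ) < l := lt_of_lt_of_le one_pos hl
    have h1l : (0:ℝ) < 1 + l := by linarith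
    have hlx : (0:ℝ) < l * x := mul_pos hl0 hx0
    have h1lx : (0:ℝ) < 1 + l * x := by linarith
    have hB : (1:ℝ) ≤ 1 + Real.log (1 + l) := by
      have := Real.log_nonneg (by linarith : (1:ℝ) ≤ 1 + l); linarith
    have hD : (1:ℝ) ≤ 1 + Real.log (1 + l * x) := by
      have := Real.log_nonneg (by linarith : (1:ℝ) ≤ 1 + l * x); linarith
    have hA : (0:ℝ) ≤ x ^ (-α) * Real.exp (-β / x) := by positivity
    -- bound on the first ratio
    have hr1 : (1 + l) / (1 + l * x) ≤ 2 / x := by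
      have h2 : (1 + l) / (1 + l * x) ≤ l * 2 / (l * x) := by
        apply div_le_div₀ (by positivity) (by linarith) hlx (by linarith)
      rwa [mul_div_mul_left 2 x hl0.ne'] at h2
    -- bound on the second ratio
    have hr2 : (1 + Real.log (1 + l)) / (1 + Real.log (1 + l * x)) ≤ 1 + 2 / x := by
      have h2x : (0:ℝ) < 2 / x := by positivity
      have hkey : 1 + l ≤ (2 / x) * (1 + l * x) := by
        have hexp : (2 / x) * (1 + l * x) = 2 / x + 2 * l := by field_simp
        rw [hexp]; linarith
      have hlog : Real.log (1 + l) ≤ Real.log (2 / x) + Real.log (1 + l * x) := by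
        calc Real.log (1 + l) ≤ Real.log ((2 / x) * (1 + l * x)) :=
              Real.log_le_log h1l hkey
          _ = Real.log (2 / x) + Real.log (1 + l * x) := Real.log_mul h2x.ne' h1lx.ne'
      have hlog2 : Real.log (2 / x) ≤ 2 / x := by
        have := Real.log_le_sub_one_of_pos h2x; linarith
      rw [div_le_iff₀ (by linarith : (0:ℝ) < 1 + Real.log (1 + l * x))]
      nlinarith [hD, hlog, hlog2, h2x.le]
    have hr10 : (0:ℝ) ≤ (1 + l) / (1 + l * x) := by positivity
    have hr20 : (0:ℝ) ≤ (1 + Real.log (1 + l)) / (1 + Real.log (1 + l * x)) :=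
      div_nonneg (by linarith) (by linarith)
    have hrp : ((1 + Real.log (1 + l)) / (1 + Real.log (1 + l * x))) ^ (1 + γ)
        ≤ (1 + 2 / x) ^ (1 + γ) := Real.rpow_le_rpow hr20 hr2 (by linarith)
    have hψnn : 0 ≤ ψ l x :=
      mul_nonneg (mul_nonneg hA hr10) (Real.rpow_nonneg hr20 _)
    rw [Real.norm_eq_abs, abs_of_nonneg hψnn]
    have step1 : ψ l x ≤ x ^ (-α) * Real.exp (-β / x) * (2 / x) * (1 + 2 / x) ^ (1 + γ) := by
      refine mul_le_mul (mul_le_mul_of_nonneg_left hr1 hA) hrp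
        (Real.rpow_nonneg hr20 _) (by positivity)
    have hterm1 : (0:ℝ) ≤ K * (x ^ (-(α + 1)) * Real.exp (-β / x)) := by positivity
    have hterm2 : (0:ℝ) ≤ K * (x ^ (-(α + γ + 2)) * Real.exp (-β / x)) := by positivity
    rcases le_or_gt 1 x with hx1 | hx1
    · have h3 : (1:ℝ) + 2 / x ≤ 3 := by
        have : 2 / x ≤ 2 := by rw [div_le_iff₀ hx0]; nlinarith
        linarith
      have h3p : (1 + 2 / x) ^ (1 + γ) ≤ (3:ℝ) ^ (1 + γ) :=
        Real.rpow_le_rpow (by positivity) h3 (by linarith)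
      have step2 : ψ l x ≤ x ^ (-α) * Real.exp (-β / x) * (2 / x) * (3:ℝ) ^ (1 + γ) :=
        le_trans step1 (mul_le_mul_of_nonneg_left h3p (by positivity))
      have hpow1 : x ^ (-α) * Real.exp (-β / x) * (2 / x) * (3:ℝ) ^ (1 + γ)
          = K * (x ^ (-(α + 1)) * Real.exp (-β / x)) := by
        rw [show x ^ (-(α + 1)) = x ^ (-α) * x ^ (-1 : ℝ) by
          rw [← Real.rpow_add hx0]; ring_nf]
        rw [Real.rpow_neg_one, div_eq_mul_inv, hK]; ring
      rw [hpow1] at step2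
      simp only [hbd]; linarith
    · have h3 : (1:ℝ) + 2 / x ≤ 3 / x := by
        have hx1' : (1:ℝ) ≤ 1 / x := by rw [le_div_iff₀ hx0]; linarith
        have : (3:ℝ) / x = 1 / x + 2 / x := by ring
        rw [this]; linarith
      have h3p : (1 + 2 / x) ^ (1 + γ) ≤ ((3:ℝ) / x) ^ (1 + γ) :=
        Real.rpow_le_rpow (by positivity) h3 (by linarith)
      have hdiv : ((3:ℝ) / x) ^ (1 + γ) = (3:ℝ) ^ (1 + γ) * x ^ (-(1 + γ)) := by
        rw [Real.div_rpow (by norm_num) hx0.le, Real.rpow_neg hx0.le, div_eq_mul_inv]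
      have step2 : ψ l x ≤ x ^ (-α) * Real.exp (-β / x) * (2 / x)
          * ((3:ℝ) ^ (1 + γ) * x ^ (-(1 + γ))) := by
        refine le_trans step1 ?_
        rw [← hdiv]
        exact mul_le_mul_of_nonneg_left h3p (by positivity)
      have hpow2 : x ^ (-α) * Real.exp (-β / x) * (2 / x)
          * ((3:ℝ) ^ (1 + γ) * x ^ (-(1 + γ)))
          = K * (x ^ (-(α + γ + 2)) * Real.exp (-β / x)) := by
        rw [show x ^ (-(α + γ + 2)) = x ^ (-α) * x ^ (-1 : ℝ) * x ^ (-(1 + γ)) by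
          rw [← Real.rpow_add hx0, ← Real.rpow_add hx0]; ring_nf]
        rw [Real.rpow_neg_one, div_eq_mul_inv, hK]; ring
      rw [hpow2] at step2
      simp only [hbd]; linarith
  -- pointwise limit
  have hlim : ∀ᵐ x ∂(volume : Measure ℝ).restrict (Set.Ioi 0),
      Tendsto (fun l => ψ l x) atTop (nhds (f x)) := by
    rw [ae_restrict_iff' measurableSet_Ioi]
    refine ae_of_all _ (fun x hx => ?_)
    have hx0 : (0:ℝ) < x := hx
    -- first ratio tends to x⁻¹
    have T1 : Tendsto (fun l : ℝ => (1 + l) / (1 + l * x)) atTop (nhds x⁻¹) := by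
      have h := (tendsto_inv_atTop_zero.add (tendsto_const_nhds (x := (1:ℝ)))).div
        (tendsto_inv_atTop_zero.add (tendsto_const_nhds (x := x)))
        (by simpa using hx0.ne')
      simp only [zero_add, one_div] at h
      refine Tendsto.congr' ?_ h
      filter_upwards [eventually_gt_atTop (0:ℝ)] with l hl
      have hlne : l ≠ 0 := hl.ne'
      have h1lx : (0:ℝ) < 1 + l * x := by nlinarith
      have hix : (0:ℝ) < l⁻¹ + x := by positivity
      show (l⁻¹ + 1) / (l⁻¹ + x) = (1 + l) / (1 + l * x)
      rw [div_eq_div_iff hix.ne' h1lx.ne']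
      field_simp
      all_goals try ring
      all_goals exact Or.inl trivial
    -- second ratio tends to 1
    have T2 : Tendsto (fun l : ℝ =>
        (1 + Real.log (1 + l)) / (1 + Real.log (1 + l * x))) atTop (nhds 1) := by
      have hDt : Tendsto (fun l : ℝ => 1 + Real.log (1 + l * x)) atTop atTop := by
        apply tendsto_atTop_add_const_left
        apply Real.tendsto_log_atTop.comp
        apply tendsto_atTop_add_const_left
        exact Tendsto.atTop_mul_const hx0 tendsto_id
      have hNum : Tendsto (fun l : ℝ => Real.log ((1 + l) / (1 + l * x))) atTop
          (nhds (Real.log x⁻¹)) := T1.log (inv_ne_zero hx0.ne')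
      have hfrac : Tendsto (fun l : ℝ =>
          Real.log ((1 + l) / (1 + l * x)) / (1 + Real.log (1 + l * x))) atTop (nhds 0) :=
        hNum.div_atTop hDt
      have h := tendsto_const_nhds (x := (1:ℝ)) (f := atTop) |>.add hfrac
      rw [add_zero] at h
      refine Tendsto.congr' ?_ h
      filter_upwards [eventually_ge_atTop (1:ℝ)] with l hl
      have hl0 : (0:ℝ) < l := lt_of_lt_of_le one_pos hl
      have h1l : (0:ℝ) < 1 + l := by linarith
      have h1lx : (0:ℝ) < 1 + l * x := by positivity
      have hD : (1:ℝ) ≤ 1 + Real.log (1 + l * x) := by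
        have := Real.log_nonneg (by nlinarith : (1:ℝ) ≤ 1 + l * x); linarith
      have hDne : (1 + Real.log (1 + l * x)) ≠ 0 := by linarith
      show 1 + Real.log ((1 + l) / (1 + l * x)) / (1 + Real.log (1 + l * x))
          = (1 + Real.log (1 + l)) / (1 + Real.log (1 + l * x))
      rw [Real.log_div h1l.ne' h1lx.ne']
      field_simp
      ring
    have Tr : Tendsto (fun l : ℝ =>
        ((1 + Real.log (1 + l)) / (1 + Real.log (1 + l * x))) ^ (1 + γ)) atTop
        (nhds ((1:ℝ) ^ (1 + γ))) := T2.rpow_const (Or.inl one_ne_zero)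
    exact (tendsto_const_nhds.mul T1).mul Tr
  -- dominated convergence
  have hdct := MeasureTheory.tendsto_integral_filter_of_dominated_convergence
    bound hmeas hboundl hbint hlim
  have hIf : ∫ x in Set.Ioi (0:ℝ), f x = Real.Gamma α / β ^ α := by
    rw [← aux_eq_Gamma α β hα hβ]
    refine setIntegral_congr_fun measurableSet_Ioi (fun x hx => ?_)
    have hx0 : (0:ℝ) < x := hx
    simp only [hf, Real.one_rpow, mul_one]
    rw [show x ^ (-(α + 1)) = x ^ (-α) * x ^ (-1 : ℝ) by
      rw [← Real.rpow_add hx0]; ring_nf]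
    rw [Real.rpow_neg_one]; ring
  rw [hIf] at hdct
  have hfin := hdct.const_mul (β ^ α / Real.Gamma α)
  rw [show (β ^ α / Real.Gamma α) * (Real.Gamma α / β ^ α) = 1 by
    field_simp] at hfin
  refine Tendsto.congr' ?_ hfin
  filter_upwards [eventually_ge_atTop (1:ℝ)] with l hl
  have hl0 : (0:ℝ) < l := lt_of_lt_of_le one_pos hl
  have h1l : (0:ℝ) < 1 + l := by linarith
  have hB1 : (1:ℝ) ≤ 1 + Real.log (1 + l) := by
    have := Real.log_nonneg (by linarith : (1:ℝ) ≤ 1 + l); linarith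
  have hB0 : (0:ℝ) < 1 + Real.log (1 + l) := by linarith
  have hBp : (0:ℝ) < (1 + Real.log (1 + l)) ^ (1 + γ) := Real.rpow_pos_of_pos hB0 _
  have hintegral : ∫ x in Set.Ioi (0:ℝ), ψ l x
      = ((1 + l) * (1 + Real.log (1 + l)) ^ (1 + γ)) *
        ∫ x in Set.Ioi (0:ℝ),
          x ^ (-α) * Real.exp (-β / x) * (1 + l * x)⁻¹ *
            (1 + Real.log (1 + l * x)) ^ (-(1 + γ)) := by
    rw [← integral_const_mul]
    refine setIntegral_congr_fun measurableSet_Ioi (fun x hx => ?_)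
    have hx0 : (0:ℝ) < x := hx
    have h1lx : (0:ℝ) < 1 + l * x := by positivity
    have hD1 : (1:ℝ) ≤ 1 + Real.log (1 + l * x) := by
      have := Real.log_nonneg (by nlinarith : (1:ℝ) ≤ 1 + l * x); linarith
    have hD0 : (0:ℝ) < 1 + Real.log (1 + l * x) := by linarith
    have hDp : (0:ℝ) < (1 + Real.log (1 + l * x)) ^ (1 + γ) := Real.rpow_pos_of_pos hD0 _
    simp only [hψ]
    rw [Real.div_rpow hB0.le hD0.le, Real.rpow_neg hD0.le]
    field_simp
  rw [hintegral]
  rw [Real.rpow_neg hB0.le]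
  field_simp
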